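/- For the ω-Lie algebra B, the exponential image of the derivation algebra is a proper subset of the automorphism group: there exists an automorphism σ of B (for instance the linear map with σ(x) = x, σ(y) = −y, σ(z) = a·y − z for some a ∈ ℂ) such that σ ≠ exp(d) for every derivation d of B. (Here derivations and automorphisms are identified with their 3×3 complex matrices relative to the basis x, y, z, and exp denotes the matrix exponential.) -/

import Mathlib

noncomputable section

/-- The underlying space ℂ³ of the ω-Lie algebra B. -/
abbrev V3 : Type := Fin 3 → ℂ

/-- The basis vector x = e₁. -/
def vx : V3 := ![1, 0, 0]

/-- The basis vector y = e₂. -/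
def vy : V3 := ![0, 1, 0]

/-- The basis vector z = e₃. -/
def vz : V3 := ![0, 0, 1]

/-- A 3×3 complex matrix is (identified with) a derivation of the bracket `b`. -/
def IsDerMat (b : V3 →ₗ[ℂ] V3 →ₗ[ℂ] V3) (A : Matrix (Fin 3) (Fin 3) ℂ) : Prop :=
  ∀ u v : V3,
    Matrix.toLin' A (b u v) = b (Matrix.toLin' A u) v + b u (Matrix.toLin' A v)

/-- A 3×3 complex matrix is (identified with) an automorphism of the bracket `b`. -/
def IsAutMat (b : V3 →ₗ[ℂ] V3 →ₗ[ℂ] V3) (A : Matrix (Fin 3) (Fin 3) ℂ) : Prop :=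
  Function.Bijective (Matrix.toLin' A) ∧
    ∀ u v : V3, Matrix.toLin' A (b u v) = b (Matrix.toLin' A u) (Matrix.toLin' A v)

lemma bcoord (b : V3 →ₗ[ℂ] V3 →ₗ[ℂ] V3)
    (hskew : ∀ u v : V3, b u v = - b v u)
    (hxy : b vx vy = vy) (hxz : b vx vz = vy + vz) (hyz : b vy vz = vx) :
    ∀ u v : V3, b u v =
      ![u 1 * v 2 - u 2 * v 1,
        u 0 * v 1 - u 1 * v 0 + (u 0 * v 2 - u 2 * v 0),
        u 0 * v 2 - u 2 * v 0] := by
  have hself : ∀ u : V3, b u u = 0 := by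
    intro u
    have h := hskew u u
    have : (2 : ℂ) • b u u = 0 := by
      rw [two_smul]; nth_rewrite 2 [h]; simp
    simpa using smul_eq_zero.mp this |>.resolve_left (by norm_num)
  have hyx : b vy vx = -vy := by rw [hskew, hxy]
  have hzx : b vz vx = -(vy + vz) := by rw [hskew, hxz]
  have hzy : b vz vy = -vx := by rw [hskew, hyz]
  intro u v
  have hu : u = u 0 • vx + u 1 • vy + u 2 • vz := by
    funext i; fin_cases i <;> simp [vx, vy, vz]
  have hv : v = v 0 • vx + v 1 • vy + v 2 • vz := by
    funext i; fin_cases i <;> simp [vx, vy, vz]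
  conv_lhs => rw [hu, hv]
  simp only [map_add, map_smul, LinearMap.add_apply, LinearMap.smul_apply,
    hxy, hxz, hyz, hyx, hzx, hzy, hself]
  funext i
  fin_cases i <;>
    simp [vx, vy, vz] <;> ring

lemma exp_sq_zero (A : Matrix (Fin 3) (Fin 3) ℂ) (h : A * A = 0) :
    NormedSpace.exp A = 1 + A := by
  letI : SeminormedRing (Matrix (Fin 3) (Fin 3) ℂ) := Matrix.linftyOpSemiNormedRing
  letI : NormedRing (Matrix (Fin 3) (Fin 3) ℂ) := Matrix.linftyOpNormedRing
  letI : NormedAlgebra ℂ (Matrix (Fin 3) (Fin 3) ℂ) := Matrix.linftyOpNormedAlgebra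
  rw [NormedSpace.exp_eq_tsum (𝕂 := ℂ)]
  have hpow : ∀ n, 2 ≤ n → A ^ n = 0 := by
    intro n hn
    obtain ⟨m, rfl⟩ := Nat.exists_eq_add_of_le hn
    rw [pow_add, pow_two, h, zero_mul]
  simp only []
  rw [tsum_eq_sum (s := Finset.range 2)
    (fun n hn => by rw [hpow n (by simp at hn; omega), smul_zero])]
  simp [Finset.sum_range_succ]

lemma der_char (b : V3 →ₗ[ℂ] V3 →ₗ[ℂ] V3)
    (hb : ∀ u v : V3, b u v =
      ![u 1 * v 2 - u 2 * v 1,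
        u 0 * v 1 - u 1 * v 0 + (u 0 * v 2 - u 2 * v 0),
        u 0 * v 2 - u 2 * v 0])
    (A : Matrix (Fin 3) (Fin 3) ℂ) (hA : IsDerMat b A) :
    A = Matrix.of ![![0, 0, 0], ![0, 0, A 1 2], ![0, 0, 0]] := by
  have key : ∀ u v : V3, ∀ i : Fin 3, (Matrix.toLin' A (b u v)) i
      = (b (Matrix.toLin' A u) v) i + (b u (Matrix.toLin' A v)) i := by
    intro u v i
    rw [hA u v]; rfl
  have e1 := key vx vy
  have e2 := key vx vz
  have e3 := key vy vz
  simp only [hb, Matrix.toLin'_apply, Matrix.mulVec, dotProduct,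
    Fin.sum_univ_three, vx, vy, vz] at e1 e2 e3
  have eA := e1 0; have eB := e1 1
  have eC := e2 0; have eD := e2 1; have eE := e2 2
  have eF := e3 0; have eG := e3 1; have eH := e3 2
  simp [Matrix.mulVec, dotProduct, Fin.sum_univ_three] at eA eB eC eD eE eF eG eH
  have h00 : A 0 0 = 0 := by linear_combination (-eB - eE) / 2
  have h01 : A 0 1 = 0 := by linear_combination (eA - eH) / 2
  have h02 : A 0 2 = 0 := by linear_combination (eC + eG) / 2
  have h10 : A 1 0 = 0 := by linear_combination (-eC + eG + eA - eH) / 2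
  have h11 : A 1 1 = 0 := by linear_combination (eD - eF - eB - eE) / 2
  have h20 : A 2 0 = 0 := by linear_combination (eA + eH) / 2
  have h21 : A 2 1 = 0 := by linear_combination (-eB + eE) / 2
  have h22 : A 2 2 = 0 := by linear_combination (-eF - eD) / 2
  funext i j
  fin_cases i <;> fin_cases j <;>
    simp [Matrix.vecHead, Matrix.vecTail, h00, h01, h02, h10, h11, h20, h21, h22]

lemma aut_mat (b : V3 →ₗ[ℂ] V3 →ₗ[ℂ] V3) (M N : Matrix (Fin 3) (Fin 3) ℂ)
    (hMN : M * N = 1) (hNM : N * M = 1)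
    (hbr : ∀ u v : V3, M.mulVec (b u v) = b (M.mulVec u) (M.mulVec v)) :
    IsAutMat b M := by
  constructor
  · apply Function.bijective_iff_has_inverse.mpr
    refine ⟨Matrix.toLin' N, fun u => ?_, fun u => ?_⟩
    · show Matrix.toLin' N (Matrix.toLin' M u) = u
      rw [← Matrix.toLin'_mul_apply, hNM, Matrix.toLin'_one, LinearMap.id_apply]
    · show Matrix.toLin' M (Matrix.toLin' N u) = u
      rw [← Matrix.toLin'_mul_apply, hMN, Matrix.toLin'_one, LinearMap.id_apply]
  · intro u v
    simpa only [Matrix.toLin'_apply] using hbr u v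

def Mc (c : ℂ) : Matrix (Fin 3) (Fin 3) ℂ := Matrix.of ![![1,0,0],![0,1,c],![0,0,1]]

lemma Mc_mul (c d : ℂ) : Mc c * Mc d = Mc (c + d) := by
  funext i j
  fin_cases i <;> fin_cases j <;>
    simp [Mc, Matrix.mul_apply, Fin.sum_univ_three, Matrix.vecHead, Matrix.vecTail] <;> ring

lemma Mc_aut (b : V3 →ₗ[ℂ] V3 →ₗ[ℂ] V3)
    (hb : ∀ u v : V3, b u v =
      ![u 1 * v 2 - u 2 * v 1,
        u 0 * v 1 - u 1 * v 0 + (u 0 * v 2 - u 2 * v 0),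
        u 0 * v 2 - u 2 * v 0]) (c : ℂ) :
    IsAutMat b (Mc c) := by
  refine aut_mat b (Mc c) (Mc (-c)) ?_ ?_ ?_
  · rw [Mc_mul, add_neg_cancel]
    funext i j
    fin_cases i <;> fin_cases j <;> simp [Mc, Matrix.one_apply, Matrix.vecHead, Matrix.vecTail]
  · rw [Mc_mul, neg_add_cancel]
    funext i j
    fin_cases i <;> fin_cases j <;> simp [Mc, Matrix.one_apply, Matrix.vecHead, Matrix.vecTail]
  · intro u v
    simp only [hb]
    funext i
    fin_cases i <;>
      simp [Mc, Matrix.mulVec, dotProduct, Fin.sum_univ_three] <;> ring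

def Msig : Matrix (Fin 3) (Fin 3) ℂ := Matrix.of ![![1,0,0],![0,-1,0],![0,0,-1]]

lemma Msig_aut (b : V3 →ₗ[ℂ] V3 →ₗ[ℂ] V3)
    (hb : ∀ u v : V3, b u v =
      ![u 1 * v 2 - u 2 * v 1,
        u 0 * v 1 - u 1 * v 0 + (u 0 * v 2 - u 2 * v 0),
        u 0 * v 2 - u 2 * v 0]) :
    IsAutMat b Msig := by
  have hsq : Msig * Msig = 1 := by
    funext i j
    fin_cases i <;> fin_cases j <;>
      simp [Msig, Matrix.mul_apply, Fin.sum_univ_three, Matrix.one_apply, Matrix.vecHead, Matrix.vecTail]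
  refine aut_mat b Msig Msig hsq hsq ?_
  intro u v
  simp only [hb]
  funext i
  fin_cases i <;>
    simp [Msig, Matrix.mulVec, dotProduct, Fin.sum_univ_three] <;> ring

/-- For the ω-Lie algebra B (with `[x,y] = y`, `[x,z] = y + z`,
`[y,z] = x`), the exponential image of the derivation algebra is a *proper* subset of the
automorphism group: the exponential of every derivation is an automorphism, but some
automorphism is not the exponential of any derivation. -/
theorem exp_derivations_proper_subset_of_automorphisms_B
    (b : V3 →ₗ[ℂ] V3 →ₗ[ℂ] V3)
    (hskew : ∀ u v : V3, b u v = - b v u)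
    (hxy : b vx vy = vy) (hxz : b vx vz = vy + vz) (hyz : b vy vz = vx) :
    (∀ A : Matrix (Fin 3) (Fin 3) ℂ, IsDerMat b A → IsAutMat b (NormedSpace.exp A)) ∧
    (∃ B : Matrix (Fin 3) (Fin 3) ℂ, IsAutMat b B ∧
      ∀ A : Matrix (Fin 3) (Fin 3) ℂ, IsDerMat b A → NormedSpace.exp A ≠ B) := by
  have hb := bcoord b hskew hxy hxz hyz
  have hkey : ∀ A : Matrix (Fin 3) (Fin 3) ℂ, IsDerMat b A →
      NormedSpace.exp A = Mc (A 1 2) := by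
    intro A hA
    have hchar := der_char b hb A hA
    have hsq : A * A = 0 := by
      rw [hchar]
      funext i j
      fin_cases i <;> fin_cases j <;>
        simp [Matrix.mul_apply, Fin.sum_univ_three, Matrix.vecHead, Matrix.vecTail]
    rw [exp_sq_zero A hsq]
    nth_rewrite 1 [hchar]
    funext i j
    fin_cases i <;> fin_cases j <;>
      simp [Mc, Matrix.one_apply, Matrix.vecHead, Matrix.vecTail]
  constructor
  · intro A hA
    rw [hkey A hA]
    exact Mc_aut b hb _
  · refine ⟨Msig, Msig_aut b hb, fun A hA heq => ?_⟩
    rw [hkey A hA] at heq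
    have := congrFun (congrFun heq 1) 1
    simp [Mc, Msig] at this
    exact (by norm_num : (1:ℂ) ≠ -1) this
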